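/- (Cayley's formula) For any positive integer n, the number of spanning trees of the complete graph K_n on n vertices equals n^{n-2}. -/

import Mathlib

open Function
set_option linter.unusedSectionVars false
set_option maxHeartbeats 1000000
namespace Cayley
variable {α : Type*}




/-- `f` is the parent function of a tree rooted at `r`. -/
def IsRootedAt (f : α → α) (r : α) : Prop := f r = r ∧ ∀ v, ∃ k, f^[k] v = r

lemma eq_of_periodic_of_reaches {f : α → α} {r x : α} (hr : f r = r) {k c : ℕ}
    (hk : f^[k] x = r) (hc0 : 0 < c) (hc : f^[c] x = x) : x = r := by
  have hmul : f^[c * k] x = x := by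
    rw [Function.iterate_mul]
    exact Function.iterate_fixed hc k
  have hge : k ≤ c * k := Nat.le_mul_of_pos_left k hc0
  calc x = f^[c * k] x := hmul.symm
    _ = f^[c * k - k] (f^[k] x) := by rw [← Function.iterate_add_apply, Nat.sub_add_cancel hge]
    _ = r := by rw [hk]; exact Function.iterate_fixed hr _

lemma IsRootedAt.root_unique {f : α → α} {r r' : α} (h : IsRootedAt f r)
    (h' : IsRootedAt f r') : r = r' := by
  obtain ⟨k, hk⟩ := h'.2 r
  exact eq_of_periodic_of_reaches h'.1 hk Nat.one_pos (by simpa using h.1)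

lemma exists_periodic_iterate [Finite α] (f : α → α) (x : α) :
    ∃ i c, 0 < c ∧ f^[c] (f^[i] x) = f^[i] x := by
  obtain ⟨i, j, hne, hij⟩ := Finite.exists_ne_map_eq_of_infinite (fun k : ℕ => f^[k] x)
  rcases lt_or_gt_of_ne hne with h | h
  · exact ⟨i, j - i, by omega, by rw [← Function.iterate_add_apply, Nat.sub_add_cancel h.le]; exact hij.symm⟩
  · exact ⟨j, i - j, by omega, by rw [← Function.iterate_add_apply, Nat.sub_add_cancel h.le]; exact hij⟩

lemma swap_conj_iterate [DecidableEq α] (c : Equiv.Perm α) (f : α → α) (k : ℕ) (x : α) :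
    (c ∘ f ∘ c.symm)^[k] x = c (f^[k] (c.symm x)) := by
  induction k generalizing x with
  | zero => simp
  | succ k ih => rw [Function.iterate_succ_apply, ih]; simp

lemma isRootedAt_conj [DecidableEq α] (c : Equiv.Perm α) {f : α → α} {r : α}
    (h : IsRootedAt f r) : IsRootedAt (c ∘ f ∘ c.symm) (c r) := by
  constructor
  · simp [h.1]
  · intro v
    obtain ⟨k, hk⟩ := h.2 (c.symm v)
    exact ⟨k, by rw [swap_conj_iterate, hk]⟩

variable [DecidableEq α] (a₀ : α)

/-- rooted-anywhere trees are roots times trees rooted at `a₀`. -/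
noncomputable def rootedEquiv :
    {p : (α → α) × α // ∃ r, IsRootedAt p.1 r} ≃ {f : α → α // IsRootedAt f a₀} × α × α where
  toFun p :=
    let r := p.2.choose
    ⟨⟨(Equiv.swap a₀ r) ∘ p.1.1 ∘ (Equiv.swap a₀ r), by
      have := isRootedAt_conj (Equiv.swap a₀ r) p.2.choose_spec
      simpa [r] using this⟩, r, p.1.2⟩
  invFun q := ⟨⟨(Equiv.swap a₀ q.2.1) ∘ q.1.1 ∘ (Equiv.swap a₀ q.2.1), q.2.2⟩, Equiv.swap a₀ q.2.1 a₀, by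
      have := isRootedAt_conj (Equiv.swap a₀ q.2.1) q.1.2
      simpa using this⟩
  left_inv := by
    rintro ⟨⟨f, b⟩, hf⟩
    apply Subtype.ext
    simp only [Prod.mk.injEq]
    constructor
    · funext v; simp
    · trivial
  right_inv := by
    rintro ⟨⟨f, hf⟩, r, b⟩
    have hc : IsRootedAt ((Equiv.swap a₀ r) ∘ f ∘ (Equiv.swap a₀ r)) r := by
      have := isRootedAt_conj (Equiv.swap a₀ r) hf
      simpa using this
    have hex : ∃ r', IsRootedAt ((Equiv.swap a₀ r) ∘ f ∘ (Equiv.swap a₀ r)) r' := ⟨r, hc⟩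
    have hch : hex.choose = r := hex.choose_spec.root_unique hc
    simp only [Prod.mk.injEq]
    refine ⟨Subtype.ext ?_, ?_, trivial⟩
    · show Equiv.swap a₀ hex.choose ∘ _ ∘ Equiv.swap a₀ hex.choose = f
      rw [hch]; funext v; simp
    · exact hch




section Joyal
variable [Fintype α] [LinearOrder α] [Nonempty α]

open scoped Classical in
/-- The set of periodic points of `h`. -/
noncomputable def per (h : α → α) : Finset α :=
  Finset.univ.filter (fun x => ∃ c, 0 < c ∧ h^[c] x = x)

lemma mem_per {h : α → α} {x : α} : x ∈ per h ↔ ∃ c, 0 < c ∧ h^[c] x = x := by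
  classical simp [per]

lemma exists_iterate_mem_per (h : α → α) (x : α) : ∃ i, h^[i] x ∈ per h := by
  obtain ⟨i, j, hne, hij⟩ := Finite.exists_ne_map_eq_of_infinite (fun k : ℕ => h^[k] x)
  rcases lt_or_gt_of_ne hne with hlt | hlt
  · exact ⟨i, mem_per.2 ⟨j - i, by omega,
      by rw [← Function.iterate_add_apply, Nat.sub_add_cancel hlt.le]; exact hij.symm⟩⟩
  · exact ⟨j, mem_per.2 ⟨i - j, by omega,
      by rw [← Function.iterate_add_apply, Nat.sub_add_cancel hlt.le]; exact hij⟩⟩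

lemma per_nonempty (h : α → α) : (per h).Nonempty := by
  obtain ⟨i, hi⟩ := exists_iterate_mem_per h (Classical.arbitrary α)
  exact ⟨_, hi⟩

lemma mem_per_apply {h : α → α} {x : α} (hx : x ∈ per h) : h x ∈ per h := by
  obtain ⟨c, hc0, hc⟩ := mem_per.1 hx
  exact mem_per.2 ⟨c, hc0, by rw [← Function.iterate_succ_apply, Function.iterate_succ_apply', hc]⟩

lemma per_injOn {h : α → α} {x y : α} (hx : x ∈ per h) (hy : y ∈ per h)
    (hxy : h x = h y) : x = y := by
  obtain ⟨c, hc0, hc⟩ := mem_per.1 hx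
  obtain ⟨d, hd0, hd⟩ := mem_per.1 hy
  have hcd : 0 < c * d := Nat.mul_pos hc0 hd0
  have h1 : x = h^[c * d - 1] (h x) := by
    rw [← Function.iterate_succ_apply, show (c * d - 1).succ = c * d from by omega,
      Function.iterate_mul, Function.iterate_fixed hc]
  have h2 : y = h^[c * d - 1] (h y) := by
    rw [← Function.iterate_succ_apply, show (c * d - 1).succ = c * d from by omega,
      Nat.mul_comm, Function.iterate_mul, Function.iterate_fixed hd]
  rw [h1, h2, hxy]

/-- `h` restricted to its periodic points, as a permutation. -/
noncomputable def perPerm (h : α → α) : {x // x ∈ per h} ≃ {x // x ∈ per h} :=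
  Equiv.ofBijective (fun x => ⟨h x, mem_per_apply x.2⟩)
    (Finite.injective_iff_bijective.mp fun x y hxy =>
      Subtype.ext (per_injOn x.2 y.2 (congrArg Subtype.val hxy)))

lemma perPerm_apply (h : α → α) (x : {x // x ∈ per h}) : (perPerm h x : α) = h x := rfl

/-- number of periodic points -/
noncomputable def kk (h : α → α) : ℕ := (per h).card

lemma kk_pos (h : α → α) : 0 < kk h := Finset.card_pos.2 (per_nonempty h)

noncomputable def eIso (h : α → α) : Fin (kk h) ≃o {x // x ∈ per h} :=
  (per h).orderIsoOfFin rfl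

/-- The spine arrangement. -/
noncomputable def arr (h : α → α) (i : Fin (kk h)) : α := (perPerm h (eIso h i) : α)

lemma arr_mem (h : α → α) (i : Fin (kk h)) : arr h i ∈ per h := (perPerm h (eIso h i)).2

lemma arr_inj (h : α → α) {i j : Fin (kk h)} (hij : arr h i = arr h j) : i = j := by
  have := (perPerm h).injective (Subtype.ext hij)
  exact (eIso h).injective this

lemma arr_surj (h : α → α) {v : α} (hv : v ∈ per h) : ∃ i, arr h i = v := by
  obtain ⟨i, hi⟩ := (eIso h).surjective ((perPerm h).symm ⟨v, hv⟩)
  exact ⟨i, by simp [arr, hi]⟩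

open scoped Classical in
/-- Joyal's correspondence: the tree part. -/
noncomputable def joyalF (h : α → α) : α → α := fun v =>
  if hv : v ∈ per h then
    (if hi : (((eIso h).symm ((perPerm h).symm ⟨v, hv⟩)) : Fin (kk h)).1 = 0 then v
     else arr h ⟨(((eIso h).symm ((perPerm h).symm ⟨v, hv⟩)) : Fin (kk h)).1 - 1,
        by omega⟩)
  else h v

lemma joyalF_not_mem {h : α → α} {v : α} (hv : v ∉ per h) : joyalF h v = h v := by
  classical simp [joyalF, hv]

lemma joyalF_arr (h : α → α) (i : Fin (kk h)) :
    joyalF h (arr h i) =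
      if i.1 = 0 then arr h i else arr h ⟨i.1 - 1, by omega⟩ := by
  classical
  have hv : arr h i ∈ per h := arr_mem h i
  have key : ((eIso h).symm ((perPerm h).symm ⟨arr h i, hv⟩)) = i := by
    have : (⟨arr h i, hv⟩ : {x // x ∈ per h}) = perPerm h (eIso h i) := Subtype.ext rfl
    rw [this, Equiv.symm_apply_apply, OrderIso.symm_apply_apply]
  simp only [joyalF, dif_pos hv, key]
  split <;> rfl

/-- The root. -/
noncomputable def rt (h : α → α) : α := arr h ⟨0, kk_pos h⟩

/-- The mark. -/
noncomputable def joyalB (h : α → α) : α := arr h ⟨kk h - 1, by have := kk_pos h; omega⟩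

lemma joyalF_iterate_arr (h : α → α) (j : ℕ) (i : Fin (kk h)) :
    (joyalF h)^[j] (arr h i) = arr h ⟨i.1 - j, by have := i.2; omega⟩ := by
  induction j with
  | zero => simp
  | succ j ih =>
    rw [Function.iterate_succ_apply', ih, joyalF_arr]
    split
    next hz =>
      have hz' : i.1 - j = 0 := hz
      congr 1
      exact Fin.ext (by show i.1 - j = i.1 - (j + 1); omega)
    next hz =>
      congr 1

lemma joyalF_rooted (h : α → α) : IsRootedAt (joyalF h) (rt h) := by
  constructor
  · show joyalF h (arr h _) = _
    rw [joyalF_arr]; rfl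
  · intro v
    classical
    -- first reach the periodic set, then descend the spine
    have hex : ∃ i, h^[i] v ∈ per h := exists_iterate_mem_per h v
    have htmin := Nat.find_spec hex
    set t0 := Nat.find hex with ht0
    have hsame : ∀ j ≤ t0, (joyalF h)^[j] v = h^[j] v := by
      intro j hj
      induction j with
      | zero => simp
      | succ j ih =>
        have hj' : j < t0 := by omega
        have hnot : h^[j] v ∉ per h := Nat.find_min _ hj'
        rw [Function.iterate_succ_apply', Function.iterate_succ_apply', ih (by omega),
          joyalF_not_mem hnot]
    obtain ⟨i, hi⟩ := arr_surj h htmin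
    refine ⟨i.1 + t0, ?_⟩
    rw [Function.iterate_add_apply _ i.1 t0, hsame t0 le_rfl, ← hi, joyalF_iterate_arr]
    show arr h _ = rt h
    congr 1; ext; simp

end Joyal




section Inv
variable [Fintype α] [LinearOrder α] [Nonempty α]

variable (f : α → α) (b : α) (hf : ∃ r, IsRootedAt f r)

noncomputable def rootOf : α := hf.choose

lemma rootOf_spec : IsRootedAt f (rootOf f hf) := hf.choose_spec

lemma rootOf_eq {r : α} (h : IsRootedAt f r) : rootOf f hf = r :=
  (rootOf_spec f hf).root_unique h

open scoped Classical in
noncomputable def mm : ℕ := Nat.find ((rootOf_spec f hf).2 b)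

lemma mm_spec : f^[mm f b hf] b = rootOf f hf := by
  classical exact Nat.find_spec ((rootOf_spec f hf).2 b)

lemma mm_min {j : ℕ} (hj : j < mm f b hf) : f^[j] b ≠ rootOf f hf := by
  classical exact Nat.find_min ((rootOf_spec f hf).2 b) hj

lemma mm_le {j : ℕ} (hj : f^[j] b = rootOf f hf) : mm f b hf ≤ j := by
  classical exact Nat.find_min' ((rootOf_spec f hf).2 b) hj

lemma pmap_injOn : ∀ {i j : ℕ}, i ≤ mm f b hf → j ≤ mm f b hf →
    f^[i] b = f^[j] b → i = j := by
  have key : ∀ {i j : ℕ}, i < j → j ≤ mm f b hf → f^[i] b ≠ f^[j] b := by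
    intro i j hij hj heq
    have hper : f^[j - i] (f^[i] b) = f^[i] b := by
      rw [← Function.iterate_add_apply, Nat.sub_add_cancel hij.le, ← heq]
    have hreach : f^[mm f b hf - i] (f^[i] b) = rootOf f hf := by
      rw [← Function.iterate_add_apply, Nat.sub_add_cancel (le_trans hij.le hj)]
      exact mm_spec f b hf
    have := eq_of_periodic_of_reaches (rootOf_spec f hf).1 hreach (by omega) hper
    exact mm_min f b hf (lt_of_lt_of_le hij hj) this
  intro i j hi hj heq
  rcases lt_trichotomy i j with h | h | h
  · exact absurd heq (key h hj)
  · exact h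
  · exact absurd heq.symm (key h hi)

/-- The spine of `(f, b)`: the orbit of `b` down to the root. -/
noncomputable def SS : Finset α := (Finset.range (mm f b hf + 1)).image (fun j => f^[j] b)

lemma mem_SS {v : α} : v ∈ SS f b hf ↔ ∃ j ≤ mm f b hf, f^[j] b = v := by
  simp [SS, Nat.lt_succ_iff]

lemma card_SS : (SS f b hf).card = mm f b hf + 1 := by
  rw [SS, Finset.card_image_of_injOn, Finset.card_range]
  intro i hi j hj
  simp only [Finset.mem_coe, Finset.mem_range, Nat.lt_succ_iff] at hi hj
  exact pmap_injOn f b hf hi hj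

noncomputable def eS : Fin (mm f b hf + 1) ≃o {x // x ∈ SS f b hf} :=
  (SS f b hf).orderIsoOfFin (card_SS f b hf)

open scoped Classical in
/-- The inverse of Joyal's correspondence. -/
noncomputable def joyalInvF : α → α := fun v =>
  if hv : v ∈ SS f b hf then
    f^[mm f b hf - (((eS f b hf).symm ⟨v, hv⟩ : Fin (mm f b hf + 1))).1] b
  else f v

lemma joyalInvF_not_mem {v : α} (hv : v ∉ SS f b hf) : joyalInvF f b hf v = f v := by
  classical simp [joyalInvF, hv]

lemma joyalInvF_eS (i : Fin (mm f b hf + 1)) :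
    joyalInvF f b hf ((eS f b hf i : α)) = f^[mm f b hf - i.1] b := by
  classical
  have hv : (eS f b hf i : α) ∈ SS f b hf := (eS f b hf i).2
  have key : (eS f b hf).symm ⟨(eS f b hf i : α), hv⟩ = i := by
    rw [show (⟨(eS f b hf i : α), hv⟩ : {x // x ∈ SS f b hf}) = eS f b hf i from Subtype.ext rfl,
      OrderIso.symm_apply_apply]
  simp only [joyalInvF, dif_pos hv, key]

end Inv

/-- bridging two `orderIsoOfFin`s of equal finsets -/
lemma orderIso_congr [LinearOrder α] {s t : Finset α} (hst : s = t) {k l : ℕ}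
    (hk : s.card = k) (hl : t.card = l) (i : Fin k) (i' : Fin l) (hii : i.1 = i'.1) :
    ((s.orderIsoOfFin hk i : α)) = (t.orderIsoOfFin hl i' : α) := by
  subst hst
  have hkl : k = l := by rw [← hk, ← hl]
  subst hkl
  have : i = i' := Fin.ext hii
  subst this
  rfl


section RT2
variable [Fintype α] [LinearOrder α] [Nonempty α]
variable (f : α → α) (b : α) (hf : ∃ r, IsRootedAt f r)

lemma invF_mapsTo {v : α} (hv : v ∈ SS f b hf) : joyalInvF f b hf v ∈ SS f b hf := by
  classical
  rw [joyalInvF, dif_pos hv]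
  exact (mem_SS f b hf).2 ⟨_, Nat.sub_le _ _, rfl⟩

lemma invF_injOn {v w : α} (hv : v ∈ SS f b hf) (hw : w ∈ SS f b hf)
    (hvw : joyalInvF f b hf v = joyalInvF f b hf w) : v = w := by
  classical
  rw [joyalInvF, dif_pos hv, joyalInvF, dif_pos hw] at hvw
  set iv := ((eS f b hf).symm ⟨v, hv⟩ : Fin (mm f b hf + 1))
  set iw := ((eS f b hf).symm ⟨w, hw⟩ : Fin (mm f b hf + 1))
  have h1 : mm f b hf - iv.1 = mm f b hf - iw.1 :=
    pmap_injOn f b hf (Nat.sub_le _ _) (Nat.sub_le _ _) hvw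
  have hivw : iv = iw := by
    apply Fin.ext
    have h2 := iv.2
    have h3 := iw.2
    omega
  have := congrArg (fun i => ((eS f b hf i : α))) hivw
  simpa [iv, iw] using this

lemma invF_iterate_mem {v : α} (hv : v ∈ SS f b hf) (j : ℕ) :
    (joyalInvF f b hf)^[j] v ∈ SS f b hf := by
  induction j with
  | zero => simpa
  | succ j ih => rw [Function.iterate_succ_apply']; exact invF_mapsTo f b hf ih

lemma invF_iterate_cancel {v w : α} (hv : v ∈ SS f b hf) (hw : w ∈ SS f b hf) :
    ∀ {i : ℕ}, (joyalInvF f b hf)^[i] v = (joyalInvF f b hf)^[i] w → v = w := by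
  intro i
  induction i with
  | zero => exact fun h => h
  | succ i ih =>
    intro h
    rw [Function.iterate_succ_apply', Function.iterate_succ_apply'] at h
    exact ih (invF_injOn f b hf (invF_iterate_mem f b hf hv i)
      (invF_iterate_mem f b hf hw i) h)

lemma SS_subset_per {v : α} (hv : v ∈ SS f b hf) : v ∈ per (joyalInvF f b hf) := by
  obtain ⟨i, j, hne, hij⟩ :=
    Finite.exists_ne_map_eq_of_infinite (fun k : ℕ => (joyalInvF f b hf)^[k] v)
  wlog hlt : i < j generalizing i j
  · exact this j i hne.symm hij.symm (by omega)
  have hy : (joyalInvF f b hf)^[j - i] v ∈ SS f b hf := invF_iterate_mem f b hf hv _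
  have : (joyalInvF f b hf)^[i] ((joyalInvF f b hf)^[j - i] v) = (joyalInvF f b hf)^[i] v := by
    rw [← Function.iterate_add_apply, show i + (j - i) = j from by omega]
    exact hij.symm
  have := invF_iterate_cancel f b hf hy hv this
  exact mem_per.2 ⟨j - i, by omega, this⟩

lemma rootOf_mem_SS : rootOf f hf ∈ SS f b hf :=
  (mem_SS f b hf).2 ⟨mm f b hf, le_rfl, mm_spec f b hf⟩

lemma per_subset_SS {v : α} (hv : v ∈ per (joyalInvF f b hf)) : v ∈ SS f b hf := by
  classical
  by_contra hvS
  -- the orbit of v must eventually enter SS, since off SS it follows f which reaches the root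
  have hex : ∃ t, (joyalInvF f b hf)^[t] v ∈ SS f b hf := by
    by_contra hall
    push_neg at hall
    have heq : ∀ j, (joyalInvF f b hf)^[j] v = f^[j] v := by
      intro j
      induction j with
      | zero => rfl
      | succ j ih =>
        rw [Function.iterate_succ_apply', Function.iterate_succ_apply', ih,
          ← ih, joyalInvF_not_mem f b hf (hall j), ih]
    obtain ⟨k, hk⟩ := (rootOf_spec f hf).2 v
    exact hall k (by rw [heq k, hk]; exact rootOf_mem_SS f b hf)
  have ht0 := Nat.find_spec hex
  set t0 := Nat.find hex with ht0def
  have ht0pos : 0 < t0 := by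
    rcases Nat.eq_zero_or_pos t0 with h | h
    · rw [h] at ht0; simp at ht0; exact absurd ht0 hvS
    · exact h
  obtain ⟨c, hc0, hc⟩ := mem_per.1 hv
  have hmem : ∀ s, (joyalInvF f b hf)^[t0 + s] v ∈ SS f b hf := by
    intro s
    induction s with
    | zero => simpa using ht0
    | succ s ih =>
      rw [show t0 + (s + 1) = (t0 + s) + 1 from rfl, Function.iterate_succ_apply']
      exact invF_mapsTo f b hf ih
  have hct : (joyalInvF f b hf)^[c * t0] v = v := by
    rw [Function.iterate_mul]
    exact Function.iterate_fixed hc t0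
  have : v ∈ SS f b hf := by
    have := hmem (c * t0 - t0)
    rwa [show t0 + (c * t0 - t0) = c * t0 from by have := Nat.le_mul_of_pos_left t0 hc0; omega, hct] at this
  exact hvS this

lemma per_invF_eq_SS : per (joyalInvF f b hf) = SS f b hf :=
  Finset.Subset.antisymm (fun _ hv => per_subset_SS f b hf hv)
    (fun _ hv => SS_subset_per f b hf hv)

lemma kk_invF : kk (joyalInvF f b hf) = mm f b hf + 1 := by
  rw [kk, per_invF_eq_SS, card_SS]

/-- the key bridge: the spine arrangement of the reconstructed function is `f`'s orbit of `b`. -/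
lemma arr_invF (i : Fin (kk (joyalInvF f b hf))) :
    arr (joyalInvF f b hf) i = f^[mm f b hf - i.1] b := by
  have hi' : i.1 < mm f b hf + 1 := by have h1 := i.2; have h2 := kk_invF f b hf; omega
  have hcoe : ((eIso (joyalInvF f b hf) i : α)) = ((eS f b hf ⟨i.1, hi'⟩ : α)) :=
    orderIso_congr (per_invF_eq_SS f b hf) rfl (card_SS f b hf) i ⟨i.1, hi'⟩ rfl
  have : arr (joyalInvF f b hf) i = joyalInvF f b hf ((eIso (joyalInvF f b hf) i : α)) := by
    rw [arr, perPerm_apply]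
  rw [this, hcoe, joyalInvF_eS]

lemma joyalB_invF : joyalB (joyalInvF f b hf) = b := by
  rw [joyalB, arr_invF]
  show f^[mm f b hf - (kk (joyalInvF f b hf) - 1)] b = b
  have h := kk_invF f b hf
  rw [show mm f b hf - (kk (joyalInvF f b hf) - 1) = 0 from by omega]
  rfl

lemma joyalF_invF : joyalF (joyalInvF f b hf) = f := by
  funext v
  by_cases hv : v ∈ per (joyalInvF f b hf)
  · obtain ⟨i, hi⟩ := arr_surj (joyalInvF f b hf) hv
    have h2 := kk_invF f b hf
    have h1 : i.1 < mm f b hf + 1 := by have := i.2; omega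
    rw [← hi, joyalF_arr]
    by_cases hz : i.1 = 0
    · rw [if_pos hz, arr_invF, hz]
      show f^[mm f b hf - 0] b = f (f^[mm f b hf - 0] b)
      rw [Nat.sub_zero, mm_spec]
      exact ((rootOf_spec f hf).1).symm
    · rw [if_neg hz, arr_invF, arr_invF]
      show f^[mm f b hf - (i.1 - 1)] b = f (f^[mm f b hf - i.1] b)
      rw [show mm f b hf - (i.1 - 1) = (mm f b hf - i.1) + 1 from by omega,
        Function.iterate_succ_apply']
  · rw [joyalF_not_mem hv, joyalInvF_not_mem]
    rwa [per_invF_eq_SS f b hf] at hv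

end RT2

section RT1
variable [Fintype α] [LinearOrder α] [Nonempty α]
variable (h : α → α) (hf : ∃ r, IsRootedAt (joyalF h) r)

lemma rootOf_joyalF : rootOf (joyalF h) hf = rt h := rootOf_eq _ _ (joyalF_rooted h)

lemma pmap_joyalF (j : ℕ) :
    (joyalF h)^[j] (joyalB h) = arr h ⟨kk h - 1 - j, by have := kk_pos h; omega⟩ :=
  joyalF_iterate_arr h j ⟨kk h - 1, by have := kk_pos h; omega⟩

lemma mm_joyalF : mm (joyalF h) (joyalB h) hf = kk h - 1 := by
  have hk := kk_pos h
  have hle : mm (joyalF h) (joyalB h) hf ≤ kk h - 1 := by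
    apply mm_le
    rw [pmap_joyalF, rootOf_joyalF]
    show arr h _ = arr h _
    congr 1
    exact Fin.ext (by show kk h - 1 - (kk h - 1) = 0; omega)
  by_contra hne
  have hlt : mm (joyalF h) (joyalB h) hf < kk h - 1 := by omega
  have hspec := mm_spec (joyalF h) (joyalB h) hf
  rw [pmap_joyalF, rootOf_joyalF] at hspec
  have := arr_inj h hspec
  have := congrArg Fin.val this
  simp only at this
  omega

lemma SS_joyalF : SS (joyalF h) (joyalB h) hf = per h := by
  ext v
  rw [mem_SS, mm_joyalF]
  constructor
  · rintro ⟨j, hj, rfl⟩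
    rw [pmap_joyalF]
    exact arr_mem h _
  · intro hv
    obtain ⟨i, hi⟩ := arr_surj h hv
    have hik : i.1 < kk h := i.2
    refine ⟨kk h - 1 - i.1, by omega, ?_⟩
    rw [pmap_joyalF, ← hi]
    congr 1
    exact Fin.ext (by show kk h - 1 - (kk h - 1 - i.1) = i.1; omega)

lemma joyalInvF_joyalF : joyalInvF (joyalF h) (joyalB h) hf = h := by
  classical
  funext v
  by_cases hv : v ∈ per h
  · have hvS : v ∈ SS (joyalF h) (joyalB h) hf := by rw [SS_joyalF]; exact hv
    rw [joyalInvF, dif_pos hvS]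
    set iS := (eS (joyalF h) (joyalB h) hf).symm ⟨v, hvS⟩ with hiS
    have hveq : ((eS (joyalF h) (joyalB h) hf iS : α)) = v := by
      rw [hiS, OrderIso.apply_symm_apply]
    have hk := kk_pos h
    have hm := mm_joyalF h hf
    have hik : iS.1 < kk h := by have := iS.2; omega
    have hbridge : ((eS (joyalF h) (joyalB h) hf iS : α)) = ((eIso h ⟨iS.1, hik⟩ : α)) :=
      orderIso_congr (SS_joyalF h hf) (card_SS _ _ _) rfl iS ⟨iS.1, hik⟩ rfl
    have hrhs : h v = arr h ⟨iS.1, hik⟩ := by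
      rw [← hveq, hbridge, arr, perPerm_apply]
    rw [hrhs, pmap_joyalF]
    congr 1
    exact Fin.ext (by show kk h - 1 - (mm (joyalF h) (joyalB h) hf - iS.1) = iS.1; omega)
  · have hvS : v ∉ SS (joyalF h) (joyalB h) hf := by rw [SS_joyalF]; exact hv
    rw [joyalInvF_not_mem _ _ _ hvS, joyalF_not_mem hv]

end RT1

section JoyalEquiv
variable (α) [Fintype α] [LinearOrder α] [Nonempty α]

/-- Joyal's bijection: endofunctions correspond to doubly rooted trees. -/
noncomputable def joyalEquiv : (α → α) ≃ {p : (α → α) × α // ∃ r, IsRootedAt p.1 r} where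
  toFun h := ⟨(joyalF h, joyalB h), rt h, joyalF_rooted h⟩
  invFun p := joyalInvF p.1.1 p.1.2 p.2
  left_inv h := joyalInvF_joyalF h _
  right_inv := by
    rintro ⟨⟨f, b⟩, hf⟩
    apply Subtype.ext
    simp only
    exact Prod.ext (joyalF_invF f b hf) (joyalB_invF f b hf)

end JoyalEquiv

section Graph
open SimpleGraph SimpleGraph.Walk
variable {V : Type*} [DecidableEq V] (v₀ : V)

/-- The unique path from `v` to `v₀` in a tree. -/
noncomputable def thePath {H : SimpleGraph V} (hH : H.IsTree) (v : V) : H.Walk v v₀ :=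
  (hH.existsUnique_path v v₀).exists.choose

lemma thePath_isPath {H : SimpleGraph V} (hH : H.IsTree) (v : V) :
    (thePath v₀ hH v).IsPath := (hH.existsUnique_path v v₀).exists.choose_spec

lemma thePath_unique {H : SimpleGraph V} (hH : H.IsTree) {v : V} (q : H.Walk v v₀)
    (hq : q.IsPath) : q = thePath v₀ hH v :=
  ((hH.existsUnique_path v v₀).unique hq (thePath_isPath v₀ hH v))

/-- The parent function of a tree. -/
noncomputable def treeFun {H : SimpleGraph V} (hH : H.IsTree) (v : V) : V :=
  (thePath v₀ hH v).getVert 1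

lemma treeFun_root {H : SimpleGraph V} (hH : H.IsTree) : treeFun v₀ hH v₀ = v₀ := by
  have h := thePath_unique v₀ hH (Walk.nil : H.Walk v₀ v₀) IsPath.nil
  rw [treeFun, ← h]
  exact Walk.getVert_of_length_le _ (by simp)

lemma thePath_eq_nil {H : SimpleGraph V} (hH : H.IsTree) :
    (thePath v₀ hH v₀).length = 0 := by
  rw [← thePath_unique v₀ hH (Walk.nil : H.Walk v₀ v₀) IsPath.nil]
  rfl

lemma treeFun_spec {H : SimpleGraph V} (hH : H.IsTree) {v : V} (hv : v ≠ v₀) :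
    H.Adj v (treeFun v₀ hH v) ∧
      ∃ (q : H.Walk (treeFun v₀ hH v) v₀), q.IsPath ∧ q.length + 1 = (thePath v₀ hH v).length := by
  cases hp : thePath v₀ hH v with
  | nil => exact absurd rfl hv
  | @cons _ u _ ha q =>
    have hpath : (Walk.cons ha q).IsPath := by rw [← hp]; exact thePath_isPath v₀ hH v
    have hq : q.IsPath := ((Walk.cons_isPath_iff ha q).1 hpath).1
    have hfv : treeFun v₀ hH v = u := by rw [treeFun, hp]; simp [Walk.getVert_cons_succ]
    rw [hfv]
    exact ⟨ha, q, hq, by simp⟩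

lemma treeFun_reaches {H : SimpleGraph V} (hH : H.IsTree) :
    ∀ (m : ℕ) (v : V), (thePath v₀ hH v).length = m → (treeFun v₀ hH)^[m] v = v₀ := by
  intro m
  induction m with
  | zero => intro v hv; exact (Walk.eq_of_length_eq_zero hv)
  | succ m ih =>
    intro v hv
    have hvne : v ≠ v₀ := by
      intro h
      rw [h] at hv
      rw [thePath_eq_nil v₀ hH] at hv
      omega
    obtain ⟨-, q, hq, hlen⟩ := treeFun_spec v₀ hH hvne
    have hql : (thePath v₀ hH (treeFun v₀ hH v)).length = m := by
      rw [← thePath_unique v₀ hH q hq]; omega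
    rw [Function.iterate_succ_apply]
    exact ih _ hql

lemma treeFun_rooted {H : SimpleGraph V} (hH : H.IsTree) : IsRootedAt (treeFun v₀ hH) v₀ :=
  ⟨treeFun_root v₀ hH, fun v => ⟨_, treeFun_reaches v₀ hH _ v rfl⟩⟩

/-- The graph of a parent function. -/
def graphOf (f : V → V) : SimpleGraph V where
  Adj v w := v ≠ w ∧ (f v = w ∨ f w = v)
  symm := ⟨by rintro v w ⟨h1, h2⟩; exact ⟨h1.symm, h2.symm⟩⟩
  loopless := ⟨by rintro v ⟨h1, -⟩; exact h1 rfl⟩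

lemma graphOf_treeFun {H : SimpleGraph V} (hH : H.IsTree) : graphOf (treeFun v₀ hH) = H := by
  ext v w
  constructor
  · rintro ⟨hne, h | h⟩
    · have hv : v ≠ v₀ := by rintro rfl; rw [treeFun_root] at h; first | exact hne h | exact hne h.symm
      have := (treeFun_spec v₀ hH hv).1
      rwa [h] at this
    · have hw : w ≠ v₀ := by rintro rfl; rw [treeFun_root] at h; first | exact hne h | exact hne h.symm
      have := (treeFun_spec v₀ hH hw).1
      rw [h] at this
      exact this.symm
  · intro hadj
    refine ⟨hadj.ne, ?_⟩
    by_cases hv : v ∈ (thePath v₀ hH w).support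
    · right
      -- the path from w to v₀ must start with the edge to v
      have htake := (thePath v₀ hH w).take_spec hv
      have htp : ((thePath v₀ hH w).takeUntil v hv).IsPath :=
        (thePath_isPath v₀ hH w).takeUntil hv
      have hsing : (thePath v₀ hH w).takeUntil v hv = Walk.cons hadj.symm Walk.nil := by
        have h2 : (Walk.cons hadj.symm Walk.nil : H.Walk w v).IsPath :=
          IsPath.nil.cons (by simpa using hadj.ne.symm)
        exact ((hH.existsUnique_path w v).unique htp h2)
      rw [hsing] at htake
      rw [treeFun, ← htake]
      simp [Walk.cons_append, Walk.getVert_cons_succ]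
    · left
      have hcons : (Walk.cons hadj (thePath v₀ hH w)).IsPath :=
        (thePath_isPath v₀ hH w).cons hv
      rw [treeFun, ← thePath_unique v₀ hH _ hcons]
      simp [Walk.getVert_cons_succ]

section OfFun
variable {f : V → V} (hf : IsRootedAt f v₀)
include hf

lemma ne_self_of_ne_root {v : V} (hv : v ≠ v₀) : f v ≠ v := by
  intro h
  obtain ⟨k, hk⟩ := hf.2 v
  exact hv (eq_of_periodic_of_reaches hf.1 hk Nat.one_pos (by simpa using h))

lemma graphOf_adj {v : V} (hv : v ≠ v₀) : (graphOf f).Adj v (f v) :=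
  ⟨(ne_self_of_ne_root v₀ hf hv).symm, Or.inl rfl⟩

lemma graphOf_reachable : ∀ (k : ℕ) (v : V), f^[k] v = v₀ → (graphOf f).Reachable v v₀ := by
  intro k
  induction k with
  | zero => intro v hv; rw [show v = v₀ from hv]
  | succ k ih =>
    intro v hv
    by_cases hvr : v = v₀
    · rw [hvr]
    · exact ((graphOf_adj v₀ hf hvr).reachable).trans (ih (f v) (by rwa [← Function.iterate_succ_apply]))

lemma graphOf_connected : (graphOf f).Connected := by
  have : Nonempty V := ⟨v₀⟩
  refine ⟨fun u v => ?_⟩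
  obtain ⟨k, hk⟩ := hf.2 u
  obtain ⟨l, hl⟩ := hf.2 v
  exact (graphOf_reachable v₀ hf k u hk).trans (graphOf_reachable v₀ hf l v hl).symm

lemma graphOf_walk_edge {x : V} (hx : x ≠ v₀) :
    ∀ {a b : V} (p : (graphOf f).Walk a b), (∃ j, f^[j] a = x) → (¬ ∃ j, f^[j] b = x) →
      s(x, f x) ∈ p.edges := by
  intro a b p
  induction p with
  | nil => intro ha hb; exact absurd ha hb
  | @cons a u b hadj q ih =>
    intro ha hb
    by_cases hu : ∃ j, f^[j] u = x
    · rw [Walk.edges_cons]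
      exact List.mem_cons_of_mem _ (ih hu hb)
    · obtain ⟨hne, hor | hor⟩ := hadj
      · obtain ⟨j, hj⟩ := ha
        rcases Nat.eq_zero_or_pos j with hj0 | hj0
        · subst hj0
          simp only [Function.iterate_zero, id_eq] at hj
          subst hj
          show s(a, f a) ∈ s(a, u) :: q.edges
          rw [hor]; simp
        · exfalso
          apply hu
          refine ⟨j - 1, ?_⟩
          rw [← hor, ← Function.iterate_succ_apply, show (j-1).succ = j from by omega]
          exact hj
      · exfalso
        apply hu
        obtain ⟨j, hj⟩ := ha
        exact ⟨j + 1, by rw [Function.iterate_succ_apply, hor]; exact hj⟩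

lemma graphOf_acyclic : (graphOf f).IsAcyclic := by
  rw [SimpleGraph.isAcyclic_iff_forall_adj_isBridge]
  have main : ∀ x y : V, f x = y → x ≠ y → (graphOf f).IsBridge s(x, y) := by
    intro x y hxy hne
    have hx : x ≠ v₀ := by
      rintro rfl
      exact hne (hf.1.symm.trans hxy)
    subst hxy
    rw [SimpleGraph.isBridge_iff_adj_and_forall_walk_mem_edges]
    intro p
    apply graphOf_walk_edge v₀ hf hx p ⟨0, rfl⟩
    rintro ⟨j, hj⟩
    apply hx
    obtain ⟨k, hk⟩ := hf.2 x
    exact eq_of_periodic_of_reaches hf.1 hk (show 0 < j + 1 by omega)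
      (by rw [Function.iterate_succ_apply]; exact hj)
  rintro v w ⟨hne, hor | hor⟩
  · exact main v w hor hne
  · rw [Sym2.eq_swap]
    exact main w v hor hne.symm

lemma graphOf_isTree : (graphOf f).IsTree :=
  ⟨graphOf_connected v₀ hf, graphOf_acyclic v₀ hf⟩

/-- The orbit walk from `v` down to the root. -/
def orbitWalk : ∀ (k : ℕ) (v : V), f^[k] v = v₀ → (graphOf f).Walk v v₀
  | 0, v, h => Walk.nil.copy (h : v = v₀).symm rfl
  | k + 1, v, h =>
    if hv : v = v₀ then Walk.nil.copy hv.symm rfl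
    else Walk.cons (graphOf_adj v₀ hf hv)
      (orbitWalk k (f v) (by rwa [← Function.iterate_succ_apply]))

lemma orbitWalk_support {k : ℕ} : ∀ {v : V} (h : f^[k] v = v₀) {u : V},
    u ∈ (orbitWalk v₀ hf k v h).support → ∃ j, f^[j] v = u := by
  induction k with
  | zero =>
    intro v h u hu
    obtain rfl : v = v₀ := h
    change u ∈ [_] at hu
    simp at hu
    exact ⟨0, by simp [hu]⟩
  | succ k ih =>
    intro v h u hu
    rw [orbitWalk] at hu
    split_ifs at hu with hv
    · rw [Walk.support_copy] at hu
      simp at hu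
      exact ⟨0, by simp [hu, hv]⟩
    · rw [Walk.support_cons] at hu
      rcases List.mem_cons.1 hu with rfl | hu
      · exact ⟨0, rfl⟩
      · obtain ⟨j, hj⟩ := ih _ hu
        exact ⟨j + 1, by rwa [Function.iterate_succ_apply]⟩

lemma orbitWalk_isPath {k : ℕ} : ∀ {v : V} (h : f^[k] v = v₀),
    (orbitWalk v₀ hf k v h).IsPath := by
  induction k with
  | zero => intro v h; obtain rfl : v = v₀ := h; exact IsPath.nil
  | succ k ih =>
    intro v h
    rw [orbitWalk]
    split_ifs with hv
    · rw [Walk.isPath_copy]; exact IsPath.nil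
    · refine (ih _).cons ?_
      intro hmem
      obtain ⟨j, hj⟩ := orbitWalk_support v₀ hf _ hmem
      apply hv
      refine eq_of_periodic_of_reaches hf.1 h (show 0 < j + 1 by omega) ?_
      rw [Function.iterate_succ_apply]
      exact hj

lemma treeFun_graphOf : treeFun v₀ (graphOf_isTree v₀ hf) = f := by
  funext v
  by_cases hv : v = v₀
  · rw [hv, treeFun_root]
    exact hf.1.symm
  · obtain ⟨k, hk⟩ := hf.2 v
    have hk0 : k ≠ 0 := by rintro rfl; exact hv hk
    obtain ⟨k, rfl⟩ : ∃ k', k = k' + 1 := ⟨k - 1, by omega⟩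
    have huniq := thePath_unique v₀ (graphOf_isTree v₀ hf) (orbitWalk v₀ hf (k+1) v hk)
      (orbitWalk_isPath v₀ hf hk)
    rw [treeFun, ← huniq, orbitWalk]
    rw [dif_neg hv]
    simp [Walk.getVert_cons_succ]

end OfFun

variable (V) in
/-- Trees are in bijection with parent functions rooted at `v₀`. -/
noncomputable def treeEquivFun : {H : SimpleGraph V // H.IsTree} ≃ {f : V → V // IsRootedAt f v₀} where
  toFun H := ⟨treeFun v₀ H.2, treeFun_rooted v₀ H.2⟩
  invFun f := ⟨graphOf f.1, graphOf_isTree v₀ f.2⟩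
  left_inv H := Subtype.ext (graphOf_treeFun v₀ H.2)
  right_inv f := Subtype.ext (treeFun_graphOf v₀ f.2)

end Graph
end Cayley


/-- The number of spanning trees of `G`. -/
noncomputable def spanningTreeCount {V : Type*} (G : SimpleGraph V) : ℕ :=
  {H : SimpleGraph V | H ≤ G ∧ H.IsTree}.ncard

/-- Cayley's formula: the complete graph on `n ≥ 1` vertices has `n ^ (n - 2)`
spanning trees. -/
theorem cayley_formula (n : ℕ) (hn : 0 < n) :
    spanningTreeCount (⊤ : SimpleGraph (Fin n)) = n ^ (n - 2) := by
  have hne : Nonempty (Fin n) := ⟨⟨0, hn⟩⟩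
  have h1 : {H : SimpleGraph (Fin n) | H ≤ ⊤ ∧ H.IsTree} = {H | H.IsTree} := by
    ext H; simp
  have h2 : Nat.card {H : SimpleGraph (Fin n) // H.IsTree}
      = Nat.card {f : Fin n → Fin n // Cayley.IsRootedAt f (⟨0, hn⟩ : Fin n)} :=
    Nat.card_congr (Cayley.treeEquivFun (V := Fin n) ⟨0, hn⟩)
  have h3 : Nat.card (Fin n → Fin n)
      = Nat.card ({f : Fin n → Fin n // Cayley.IsRootedAt f (⟨0, hn⟩ : Fin n)} × Fin n × Fin n) :=
    Nat.card_congr ((Cayley.joyalEquiv (Fin n)).trans (Cayley.rootedEquiv (⟨0, hn⟩ : Fin n)))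
  rw [Nat.card_eq_fintype_card, Nat.card_prod, Nat.card_prod] at h3
  simp only [Fintype.card_fun, Fintype.card_fin, Nat.card_eq_fintype_card,
    Fintype.card_fin] at h3
  have hpow : n ^ n = n ^ (n - 2) * (n * n) := by
    rcases Nat.lt_or_ge n 2 with h | h
    · interval_cases n
      simp
    · rw [← pow_two, ← pow_add, show n - 2 + 2 = n from by omega]
  have hT : Nat.card {f : Fin n → Fin n // Cayley.IsRootedAt f (⟨0, hn⟩ : Fin n)}
      = n ^ (n - 2) :=
    Nat.eq_of_mul_eq_mul_right (show 0 < n * n by positivity) (h3.symm.trans hpow)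
  rw [spanningTreeCount, h1, ← Nat.card_coe_set_eq, Set.coe_setOf, h2, hT]
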